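/- Let A be an m × n matrix over ℂ. Suppose every row of A has ℓ₂ norm less than α, and the supports of any two distinct columns of A intersect in at most t coordinates. Let M = A*A (conjugate transpose of A times A). Then Σ_{i≠j} |M_{ij}|² ≤ t·m·α⁴. Moreover, if in addition every row of A has support of size at most q, then Σ_{i≠j} |M_{ij}|² ≤ (1 − 1/q)·t·m·α⁴. -/

import Mathlib

open Matrix

private lemma offdiag_sum_eq {n : ℕ} (g : Fin n → ℝ) :
    ∑ p ∈ Finset.univ.filter (fun p : Fin n × Fin n => p.1 ≠ p.2), g p.1 * g p.2
      = (∑ j, g j) ^ 2 - ∑ j, g j ^ 2 := by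
  have htot : ∑ p : Fin n × Fin n, g p.1 * g p.2 = (∑ j, g j) ^ 2 := by
    rw [sq, Finset.sum_mul_sum, Fintype.sum_prod_type]
  have hdiag : ∑ p ∈ Finset.univ.filter (fun p : Fin n × Fin n => p.1 = p.2),
      g p.1 * g p.2 = ∑ j, g j ^ 2 := by
    rw [Finset.sum_filter, Fintype.sum_prod_type]
    simp [Finset.sum_ite_eq, sq]
  have hsplit := Finset.sum_filter_add_sum_filter_not Finset.univ
    (fun p : Fin n × Fin n => p.1 = p.2) (fun p => g p.1 * g p.2)
  have : ∑ p ∈ Finset.univ.filter (fun p : Fin n × Fin n => ¬ p.1 = p.2),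
      g p.1 * g p.2 = (∑ j, g j) ^ 2 - ∑ j, g j ^ 2 := by
    rw [← htot, ← hsplit, hdiag]; ring
  simpa using this

theorem sum_of_squares_off_diagonal {m n : ℕ} (A : Matrix (Fin m) (Fin n) ℂ)
    (α : ℝ) (t q : ℕ)
    (hrow : ∀ i : Fin m, Real.sqrt (∑ j : Fin n, ‖A i j‖ ^ 2) < α)
    (hcol : ∀ j₁ j₂ : Fin n, j₁ ≠ j₂ →
      ({i : Fin m | A i j₁ ≠ 0} ∩ {i : Fin m | A i j₂ ≠ 0}).ncard ≤ t) :
    (∑ p ∈ Finset.univ.filter (fun p : Fin n × Fin n => p.1 ≠ p.2),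
        ‖(Aᴴ * A) p.1 p.2‖ ^ 2) ≤ (t : ℝ) * (m : ℝ) * α ^ 4 ∧
    ((∀ i : Fin m, ({j : Fin n | A i j ≠ 0}).ncard ≤ q) →
      (∑ p ∈ Finset.univ.filter (fun p : Fin n × Fin n => p.1 ≠ p.2),
          ‖(Aᴴ * A) p.1 p.2‖ ^ 2) ≤
        (1 - 1 / (q : ℝ)) * (t : ℝ) * (m : ℝ) * α ^ 4) := by
  set f : Fin m → Fin n → ℝ := fun i j => ‖A i j‖ ^ 2 with hf
  have hfnn : ∀ i j, 0 ≤ f i j := fun i j => by positivity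
  -- row norms
  have hr : ∀ i, (∑ j, f i j) < α ^ 2 := by
    intro i
    have h0 : 0 ≤ ∑ j, f i j := Finset.sum_nonneg fun j _ => hfnn i j
    have := hrow i
    have hα : 0 ≤ α := le_of_lt (lt_of_le_of_lt (Real.sqrt_nonneg _) this)
    calc (∑ j, f i j) = Real.sqrt (∑ j, f i j) ^ 2 := (Real.sq_sqrt h0).symm
      _ < α ^ 2 := by
          have := hrow i
          exact pow_lt_pow_left₀ this (Real.sqrt_nonneg _) (by norm_num)
  have hrsq : ∀ i, (∑ j, f i j) ^ 2 ≤ α ^ 4 := by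
    intro i
    have h0 : 0 ≤ ∑ j, f i j := Finset.sum_nonneg fun j _ => hfnn i j
    have : (∑ j, f i j) ^ 2 ≤ (α ^ 2) ^ 2 := pow_le_pow_left₀ h0 (le_of_lt (hr i)) 2
    linarith [this, sq_nonneg α]
  -- key pairwise bound via Cauchy-Schwarz on the support intersection
  have hM : ∀ j₁ j₂ : Fin n, j₁ ≠ j₂ →
      ‖(Aᴴ * A) j₁ j₂‖ ^ 2 ≤ (t : ℝ) * ∑ i, f i j₁ * f i j₂ := by
    intro j₁ j₂ hne
    set S : Finset (Fin m) := Finset.univ.filter (fun i => A i j₁ ≠ 0 ∧ A i j₂ ≠ 0) with hS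
    have hcard : (S.card : ℝ) ≤ (t : ℝ) := by
      have hset : ({i : Fin m | A i j₁ ≠ 0} ∩ {i : Fin m | A i j₂ ≠ 0}) = ↑S := by
        ext i; simp [hS]
      have := hcol j₁ j₂ hne
      rw [hset, Set.ncard_coe_finset] at this
      exact_mod_cast this
    have hMval : (Aᴴ * A) j₁ j₂ = ∑ i ∈ S, star (A i j₁) * A i j₂ := by
      rw [Matrix.mul_apply]
      refine (Finset.sum_subset (Finset.subset_univ S) ?_).symm
      intro i _ hiS
      simp only [hS, Finset.mem_filter, Finset.mem_univ, true_and, not_and_or, not_not] at hiS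
      rcases hiS with h | h <;> simp [Matrix.conjTranspose_apply, h]
    have habs : ‖(Aᴴ * A) j₁ j₂‖ ≤
        ∑ i ∈ S, ‖A i j₁‖ * ‖A i j₂‖ := by
      rw [hMval]
      refine (norm_sum_le _ _).trans_eq ?_
      refine Finset.sum_congr rfl fun i _ => ?_
      simp [Matrix.conjTranspose_apply]
    have hcs : (∑ i ∈ S, ‖A i j₁‖ * ‖A i j₂‖) ^ 2 ≤
        (S.card : ℝ) * ∑ i ∈ S, (‖A i j₁‖ * ‖A i j₂‖) ^ 2 :=
      sq_sum_le_card_mul_sum_sq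
    have hsub : ∑ i ∈ S, (‖A i j₁‖ * ‖A i j₂‖) ^ 2 ≤
        ∑ i, f i j₁ * f i j₂ := by
      have heq : ∀ i : Fin m, (‖A i j₁‖ * ‖A i j₂‖) ^ 2
          = f i j₁ * f i j₂ := fun i => by rw [hf]; ring
      simp only [heq]
      exact Finset.sum_le_sum_of_subset_of_nonneg (Finset.subset_univ S)
        fun i _ _ => by rw [hf]; positivity
    have h1 : ‖(Aᴴ * A) j₁ j₂‖ ^ 2 ≤
        (∑ i ∈ S, ‖A i j₁‖ * ‖A i j₂‖) ^ 2 :=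
      pow_le_pow_left₀ (norm_nonneg _) habs 2
    have hsnn : (0:ℝ) ≤ ∑ i ∈ S, (‖A i j₁‖ * ‖A i j₂‖) ^ 2 :=
      Finset.sum_nonneg fun i _ => by positivity
    calc ‖(Aᴴ * A) j₁ j₂‖ ^ 2
        ≤ (S.card : ℝ) * ∑ i ∈ S, (‖A i j₁‖ * ‖A i j₂‖) ^ 2 :=
          h1.trans hcs
      _ ≤ (t : ℝ) * ∑ i, f i j₁ * f i j₂ := by
          refine mul_le_mul hcard hsub hsnn (by positivity)
  -- reduce LHS to row sums
  have hmain : (∑ p ∈ Finset.univ.filter (fun p : Fin n × Fin n => p.1 ≠ p.2),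
      ‖(Aᴴ * A) p.1 p.2‖ ^ 2) ≤
      (t : ℝ) * ∑ i, ((∑ j, f i j) ^ 2 - ∑ j, f i j ^ 2) := by
    calc (∑ p ∈ Finset.univ.filter (fun p : Fin n × Fin n => p.1 ≠ p.2),
          ‖(Aᴴ * A) p.1 p.2‖ ^ 2)
        ≤ ∑ p ∈ Finset.univ.filter (fun p : Fin n × Fin n => p.1 ≠ p.2),
            (t : ℝ) * ∑ i, f i p.1 * f i p.2 := by
          refine Finset.sum_le_sum fun p hp => ?_
          exact hM p.1 p.2 (Finset.mem_filter.mp hp).2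
      _ = (t : ℝ) * ∑ i, ∑ p ∈ Finset.univ.filter (fun p : Fin n × Fin n => p.1 ≠ p.2),
            f i p.1 * f i p.2 := by
          rw [← Finset.mul_sum, Finset.sum_comm]
      _ = (t : ℝ) * ∑ i, ((∑ j, f i j) ^ 2 - ∑ j, f i j ^ 2) := by
          rw [Finset.sum_congr rfl fun i _ => offdiag_sum_eq (f i)]
  constructor
  · refine hmain.trans ?_
    have : ∑ i, ((∑ j, f i j) ^ 2 - ∑ j, f i j ^ 2) ≤ (m : ℝ) * α ^ 4 := by
      calc ∑ i, ((∑ j, f i j) ^ 2 - ∑ j, f i j ^ 2) ≤ ∑ i : Fin m, α ^ 4 := by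
            refine Finset.sum_le_sum fun i _ => ?_
            have := hrsq i
            have h2 : 0 ≤ ∑ j, f i j ^ 2 := Finset.sum_nonneg fun j _ => sq_nonneg _
            linarith
        _ = (m : ℝ) * α ^ 4 := by simp [mul_comm]
    calc (t:ℝ) * ∑ i, ((∑ j, f i j) ^ 2 - ∑ j, f i j ^ 2) ≤ (t:ℝ) * ((m:ℝ) * α ^ 4) :=
          mul_le_mul_of_nonneg_left this (Nat.cast_nonneg t)
      _ = (t:ℝ) * (m:ℝ) * α ^ 4 := by ring
  · intro hq
    have hrowbd : ∀ i, (∑ j, f i j) ^ 2 - ∑ j, f i j ^ 2 ≤ (1 - 1/(q:ℝ)) * α ^ 4 := by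
      intro i
      set T : Finset (Fin n) := Finset.univ.filter (fun j => A i j ≠ 0) with hT
      have hTcard : (T.card : ℝ) ≤ (q : ℝ) := by
        have hset : ({j : Fin n | A i j ≠ 0}) = ↑T := by ext j; simp [hT]
        have := hq i
        rw [hset, Set.ncard_coe_finset] at this
        exact_mod_cast this
      rcases Nat.eq_zero_or_pos q with hq0 | hqpos
      · -- q = 0 : row is zero
        have hT0 : T = ∅ := by
          have : (T.card : ℝ) ≤ 0 := by rw [hq0] at hTcard; simpa using hTcard
          have : T.card = 0 := by exact_mod_cast le_antisymm (by exact_mod_cast this) (Nat.zero_le _)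
          exact Finset.card_eq_zero.mp this
        have hzero : ∀ j, f i j = 0 := by
          intro j
          have : A i j = 0 := by
            by_contra h
            have : j ∈ T := by simp [hT, h]
            simp [hT0] at this
          simp [hf, this]
        simp only [hzero, Finset.sum_const_zero, hq0]
        norm_num
        positivity
      · -- q ≥ 1
        have hrow_eq : ∑ j, f i j = ∑ j ∈ T, f i j := by
          refine (Finset.sum_subset (Finset.subset_univ T) ?_).symm
          intro j _ hjT
          simp only [hT, Finset.mem_filter, Finset.mem_univ, true_and, not_not] at hjT
          simp [hf, hjT]
        have hcs : (∑ j ∈ T, f i j) ^ 2 ≤ (T.card : ℝ) * ∑ j ∈ T, f i j ^ 2 :=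
          sq_sum_le_card_mul_sum_sq
        have hsub : ∑ j ∈ T, f i j ^ 2 ≤ ∑ j, f i j ^ 2 :=
          Finset.sum_le_sum_of_subset_of_nonneg (Finset.subset_univ T)
            fun j _ _ => sq_nonneg _
        have hqR : (0:ℝ) < q := by exact_mod_cast hqpos
        have hlow : (∑ j, f i j) ^ 2 / (q:ℝ) ≤ ∑ j, f i j ^ 2 := by
          rw [div_le_iff₀ hqR]
          calc (∑ j, f i j) ^ 2 = (∑ j ∈ T, f i j) ^ 2 := by rw [hrow_eq]
            _ ≤ (T.card : ℝ) * ∑ j ∈ T, f i j ^ 2 := hcs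
            _ ≤ (q : ℝ) * ∑ j, f i j ^ 2 := by
                refine mul_le_mul hTcard hsub (Finset.sum_nonneg fun j _ => sq_nonneg _)
                  (Nat.cast_nonneg q)
            _ = (∑ j, f i j ^ 2) * (q:ℝ) := by ring
        have hfac : (0:ℝ) ≤ 1 - 1/(q:ℝ) := by
          have : 1/(q:ℝ) ≤ 1 := by
            rw [div_le_one hqR]; exact_mod_cast hqpos
          linarith
        calc (∑ j, f i j) ^ 2 - ∑ j, f i j ^ 2
            ≤ (∑ j, f i j) ^ 2 - (∑ j, f i j) ^ 2 / (q:ℝ) := by linarith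
          _ = (1 - 1/(q:ℝ)) * (∑ j, f i j) ^ 2 := by ring
          _ ≤ (1 - 1/(q:ℝ)) * α ^ 4 := mul_le_mul_of_nonneg_left (hrsq i) hfac
    refine hmain.trans ?_
    calc (t:ℝ) * ∑ i, ((∑ j, f i j) ^ 2 - ∑ j, f i j ^ 2)
        ≤ (t:ℝ) * ∑ i : Fin m, (1 - 1/(q:ℝ)) * α ^ 4 := by
          refine mul_le_mul_of_nonneg_left (Finset.sum_le_sum fun i _ => hrowbd i)
            (Nat.cast_nonneg t)
      _ = (1 - 1/(q:ℝ)) * (t:ℝ) * (m:ℝ) * α ^ 4 := by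
          simp [Finset.sum_const]; ring
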